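/- Let S be a minimal blocking set in a 2-(v, k, λ) design with replication number r and b blocks (every block meets S; through each point of S there is a block meeting S in exactly one point). Then |S| < v·(1 + √(r−λ))/k. -/

import Mathlib

set_option maxHeartbeats 1000000 in
/-- Upper bound on minimal blocking sets in (not necessarily symmetric) 2-(v,k,λ) designs. -/
theorem minimal_blocking_set_design_bound (X B : Type*) [Fintype X] [Fintype B]
    (blk : B → Finset X) (v k lam r b : ℕ)
    (hv : Fintype.card X = v) (hb : Fintype.card B = b)
    (hv0 : 0 < v) (hk : 2 ≤ k) (hkv : k < v) (hlam0 : 0 < lam)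
    (hksize : ∀ β : B, (blk β).card = k)
    (hlam : ∀ x y : X, x ≠ y → Nat.card {β : B // x ∈ blk β ∧ y ∈ blk β} = lam)
    (hr : ∀ x : X, Nat.card {β : B // x ∈ blk β} = r)
    (S : Finset X)
    (hblock : ∀ β : B, ∃ p ∈ S, p ∈ blk β)
    (hmin : ∀ p ∈ S, ∃ β : B, p ∈ blk β ∧ Nat.card {q : X // q ∈ S ∧ q ∈ blk β} = 1) :
    (S.card : ℝ) < (v : ℝ) * (1 + Real.sqrt ((r : ℝ) - lam)) / k := by
  classical
  -- filter versions of the hypotheses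
  have hr' : ∀ p : X, (Finset.univ.filter (fun β : B => p ∈ blk β)).card = r := by
    intro p; rw [← hr p, Nat.card_eq_fintype_card, Fintype.card_subtype]
  have hlam' : ∀ p q : X, p ≠ q →
      (Finset.univ.filter (fun β : B => p ∈ blk β ∧ q ∈ blk β)).card = lam := by
    intro p q hpq; rw [← hlam p q hpq, Nat.card_eq_fintype_card, Fintype.card_subtype]
  set n : B → ℕ := fun β => (S.filter (fun p => p ∈ blk β)).card with hn
  have hmin' : ∀ p ∈ S, ∃ β : B, p ∈ blk β ∧ n β = 1 := by
    intro p hp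
    obtain ⟨β, hβ1, hβ2⟩ := hmin p hp
    rw [Nat.card_eq_fintype_card, Fintype.card_subtype] at hβ2
    have heq : Finset.univ.filter (fun q : X => q ∈ S ∧ q ∈ blk β)
        = S.filter (fun p => p ∈ blk β) := by
      ext q; simp
    rw [heq] at hβ2
    exact ⟨β, hβ1, hβ2⟩
  -- B is nonempty and S is nonempty
  have hv2 : 2 ≤ v := le_of_lt (lt_of_le_of_lt hk hkv)
  obtain ⟨x0, y0, hxy0⟩ := Fintype.exists_pair_of_one_lt_card (by omega : 1 < Fintype.card X)
  have hBne : Nonempty B := by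
    have h := hlam x0 y0 hxy0
    have hpos : 0 < Nat.card {β : B // x0 ∈ blk β ∧ y0 ∈ blk β} := by rw [h]; exact hlam0
    obtain ⟨⟨⟨β, _⟩⟩, -⟩ := Nat.card_pos_iff.mp hpos
    exact ⟨β⟩
  obtain ⟨β0⟩ := hBne
  have hSne : 0 < S.card := by
    obtain ⟨p, hp, _⟩ := hblock β0
    exact Finset.card_pos.mpr ⟨p, hp⟩
  have hb0 : 0 < b := by
    rw [← hb]; exact Fintype.card_pos_iff.mpr ⟨β0⟩
  -- numerical identities
  have hvr : v * r = b * k := by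
    have h : ∑ p : X, (Finset.univ.filter (fun β : B => p ∈ blk β)).card
        = ∑ β : B, (blk β).card := by
      simp_rw [Finset.card_filter]
      rw [Finset.sum_comm]
      refine Finset.sum_congr rfl fun β _ => ?_
      rw [← Finset.card_filter, Finset.filter_univ_mem]
    simp_rw [hr', hksize, Finset.sum_const, smul_eq_mul, Finset.card_univ, hv, hb] at h
    exact h
  have hlr : (v - 1) * lam = r * (k - 1) := by
    have key : ∑ y ∈ Finset.univ.erase x0, ∑ β : B, (if x0 ∈ blk β ∧ y ∈ blk β then 1 else 0)
        = (v - 1) * lam := by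
      have h : ∀ y ∈ Finset.univ.erase x0,
          (∑ β : B, (if x0 ∈ blk β ∧ y ∈ blk β then 1 else 0)) = lam := by
        intro y hy
        simp_rw [← Finset.card_filter]
        exact hlam' x0 y (Ne.symm (Finset.ne_of_mem_erase hy))
      rw [Finset.sum_congr rfl h, Finset.sum_const, smul_eq_mul,
        Finset.card_erase_of_mem (Finset.mem_univ x0), Finset.card_univ, hv]
    rw [Finset.sum_comm] at key
    have inner : ∀ β : B, (∑ y ∈ Finset.univ.erase x0, (if x0 ∈ blk β ∧ y ∈ blk β then 1 else 0))
        = if x0 ∈ blk β then k - 1 else 0 := by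
      intro β
      by_cases h : x0 ∈ blk β
      · simp only [h, true_and, if_true]
        rw [← Finset.card_filter]
        have heq : (Finset.univ.erase x0).filter (fun y => y ∈ blk β) = (blk β).erase x0 := by
          ext y; simp [and_comm]
        rw [heq, Finset.card_erase_of_mem h, hksize]
      · simp [h]
    rw [Finset.sum_congr rfl (fun β _ => inner β), Finset.sum_ite] at key
    simp only [Finset.sum_const_zero, add_zero, Finset.sum_const, smul_eq_mul, hr'] at key
    rw [← key, mul_comm]
  have hr0 : 0 < r := by
    rcases Nat.eq_zero_or_pos r with h | h
    · rw [h, zero_mul] at hlr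
      rcases Nat.mul_eq_zero.mp hlr with h1 | h1 <;> omega
    · exact h
  -- sum identities
  have sum1 : ∑ β : B, n β = S.card * r := by
    simp_rw [hn, Finset.card_filter]
    rw [Finset.sum_comm]
    simp_rw [← Finset.card_filter, hr']
    simp [mul_comm]
  have sum2 : ∑ β : B, n β * n β = S.card * (r + (S.card - 1) * lam) := by
    have step : ∀ β : B, n β * n β
        = ∑ p ∈ S, ∑ q ∈ S, (if p ∈ blk β ∧ q ∈ blk β then 1 else 0) := by
      intro β
      show (S.filter (fun p => p ∈ blk β)).card * (S.filter (fun p => p ∈ blk β)).card = _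
      rw [Finset.card_filter, Finset.sum_mul_sum]
      refine Finset.sum_congr rfl fun p hp => Finset.sum_congr rfl fun q hq => ?_
      by_cases h1 : p ∈ blk β <;> by_cases h2 : q ∈ blk β <;> simp [h1, h2]
    simp_rw [step]
    rw [Finset.sum_comm]
    have inner : ∀ p ∈ S, (∑ q ∈ S, ∑ β : B, (if p ∈ blk β ∧ q ∈ blk β then 1 else 0))
        = r + (S.card - 1) * lam := by
      intro p hp
      rw [← Finset.sum_erase_add _ _ hp]
      have h1 : ∑ β : B, (if p ∈ blk β ∧ p ∈ blk β then 1 else 0) = r := by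
        simp_rw [and_self, ← Finset.card_filter, hr']
      have h2 : ∑ q ∈ S.erase p, ∑ β : B, (if p ∈ blk β ∧ q ∈ blk β then 1 else 0)
          = (S.card - 1) * lam := by
        have h3 : ∀ q ∈ S.erase p, (∑ β : B, (if p ∈ blk β ∧ q ∈ blk β then 1 else 0)) = lam := by
          intro q hq
          simp_rw [← Finset.card_filter]
          exact hlam' p q (Ne.symm (Finset.ne_of_mem_erase hq))
        rw [Finset.sum_congr rfl h3, Finset.sum_const, smul_eq_mul, Finset.card_erase_of_mem hp]
      rw [h2, h1, add_comm]
    refine Eq.trans (Finset.sum_congr rfl fun p hp => Eq.trans Finset.sum_comm (inner p hp)) ?_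
    rw [Finset.sum_const, smul_eq_mul]
  -- tangent blocks: injection from S into blocks with n β = 1
  have htan : S.card ≤ (Finset.univ.filter (fun β : B => n β = 1)).card := by
    set f : X → B := fun p => if h : p ∈ S then (hmin' p h).choose else β0 with hf
    apply Finset.card_le_card_of_injOn f
    · intro p hp
      simp only [Finset.mem_coe] at hp ⊢
      simp only [hf, dif_pos hp, Finset.mem_filter, Finset.mem_univ, true_and]
      exact ((hmin' p hp).choose_spec).2
    · intro p hp q hq hpq
      simp only [Finset.mem_coe] at hp hq
      have hp1 := (hmin' p hp).choose_spec
      have hq1 := (hmin' q hq).choose_spec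
      simp only [hf, dif_pos hp, dif_pos hq] at hpq
      set β := (hmin' p hp).choose with hβ
      have hqβ : q ∈ blk β := by rw [hpq]; exact hq1.1
      have hcard : (S.filter (fun x => x ∈ blk β)).card = 1 := hp1.2
      obtain ⟨a, ha⟩ := Finset.card_eq_one.mp hcard
      have h1 : p ∈ ({a} : Finset X) := ha ▸ Finset.mem_filter.mpr ⟨hp, hp1.1⟩
      have h2 : q ∈ ({a} : Finset X) := ha ▸ Finset.mem_filter.mpr ⟨hq, hqβ⟩
      simp only [Finset.mem_singleton] at h1 h2
      rw [h1, h2]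
  -- pass to the reals
  set xx : ℝ := (S.card : ℝ) with hxx
  set μ : ℝ := xx * r / b with hμ
  have hxx1 : (1:ℝ) ≤ xx := by rw [hxx]; exact_mod_cast hSne
  have hxx0 : (0:ℝ) < xx := lt_of_lt_of_le one_pos hxx1
  have hbb0 : (0:ℝ) < b := by exact_mod_cast hb0
  have hkk0 : (0:ℝ) < k := by positivity
  have hkk2 : (2:ℝ) ≤ k := by exact_mod_cast hk
  have hvv0 : (0:ℝ) < v := by exact_mod_cast hv0
  have hrr0 : (0:ℝ) < r := by exact_mod_cast hr0
  have hll0 : (0:ℝ) < lam := by exact_mod_cast hlam0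
  have hkv' : (k:ℝ) < v := by exact_mod_cast hkv
  have hvrR : (v:ℝ) * r = b * k := by exact_mod_cast hvr
  have hlrR : ((v:ℝ) - 1) * lam = r * ((k:ℝ) - 1) := by
    calc ((v:ℝ) - 1) * lam = (((v-1:ℕ) * lam : ℕ) : ℝ) := by
          push_cast [Nat.cast_sub (by omega : 1 ≤ v)]; ring
    _ = (((r * (k-1) : ℕ)) : ℝ) := by rw [hlr]
    _ = r * ((k:ℝ) - 1) := by push_cast [Nat.cast_sub (by omega : 1 ≤ k)]; ring
  have sum1R : ∑ β : B, (n β : ℝ) = xx * r := by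
    rw [hxx]; exact_mod_cast sum1
  have sum2R : ∑ β : B, (n β : ℝ) * (n β : ℝ) = xx * ((r:ℝ) + (xx - 1) * lam) := by
    rw [hxx]
    calc ∑ β : B, (n β : ℝ) * (n β : ℝ) = ((∑ β : B, n β * n β : ℕ) : ℝ) := by push_cast; rfl
    _ = ((S.card * (r + (S.card - 1) * lam) : ℕ) : ℝ) := by rw [sum2]
    _ = (S.card : ℝ) * ((r:ℝ) + ((S.card:ℝ) - 1) * lam) := by
          push_cast [Nat.cast_sub hSne]; ring
  -- variance bound
  have hvar : xx * (1 - μ)^2 ≤ ∑ β : B, ((n β : ℝ) - μ)^2 := by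
    have h1 : xx * (1 - μ)^2
        ≤ ∑ β ∈ Finset.univ.filter (fun β : B => n β = 1), ((n β : ℝ) - μ)^2 := by
      have h2 : ∀ β ∈ Finset.univ.filter (fun β : B => n β = 1),
          ((n β : ℝ) - μ)^2 = (1 - μ)^2 := by
        intro β hβ
        have h3 : n β = 1 := (Finset.mem_filter.mp hβ).2
        rw [h3]; norm_num
      rw [Finset.sum_congr rfl h2, Finset.sum_const, nsmul_eq_mul]
      have h4 : xx ≤ ((Finset.univ.filter (fun β : B => n β = 1)).card : ℝ) := by
        rw [hxx]; exact_mod_cast htan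
      exact mul_le_mul_of_nonneg_right h4 (sq_nonneg _)
    refine le_trans h1 (Finset.sum_le_sum_of_subset_of_nonneg (Finset.filter_subset _ _) ?_)
    intro β _ _
    positivity
  have hexp : ∑ β : B, ((n β : ℝ) - μ)^2
      = xx * ((r:ℝ) + (xx - 1) * lam) - 2 * μ * (xx * r) + b * μ^2 := by
    have h1 : ∀ β : B, ((n β : ℝ) - μ)^2 = (n β : ℝ) * (n β : ℝ) - 2 * μ * (n β : ℝ) + μ^2 := by
      intro β; ring
    rw [Finset.sum_congr rfl fun β _ => h1 β, Finset.sum_add_distrib, Finset.sum_sub_distrib,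
      ← Finset.mul_sum, sum1R, sum2R, Finset.sum_const, Finset.card_univ, hb, nsmul_eq_mul]
  -- main inequality
  have hmain : (1 - μ)^2 ≤ (r : ℝ) - lam + xx * ((lam:ℝ) - (r:ℝ)^2 / b) := by
    refine le_of_mul_le_mul_left ?_ hxx0
    calc xx * (1 - μ)^2 ≤ ∑ β : B, ((n β : ℝ) - μ)^2 := hvar
    _ = xx * ((r:ℝ) + (xx - 1) * lam) - 2 * μ * (xx * r) + b * μ^2 := hexp
    _ = xx * ((r : ℝ) - lam + xx * ((lam:ℝ) - (r:ℝ)^2 / b)) := by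
        rw [hμ]; field_simp; ring
  have hlamr : (lam:ℝ) < r := by nlinarith [hlrR, mul_pos hll0 (sub_pos.mpr hkv')]
  have hneg : (lam:ℝ) - (r:ℝ)^2 / b < 0 := by
    rw [sub_neg, lt_div_iff₀ hbb0]
    have e2 : (lam:ℝ) * ((v:ℝ) * r) = (lam:ℝ) * ((b:ℝ) * k) := by rw [hvrR]
    have h5 : (lam:ℝ) * b * k < (r:ℝ)^2 * k := by
      nlinarith [e2, hlrR, mul_pos hrr0 (sub_pos.mpr hlamr)]
    exact lt_of_mul_lt_mul_right h5 (le_of_lt hkk0)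
  have hsq : (μ - 1)^2 < (r:ℝ) - lam := by
    have h6 : xx * ((lam:ℝ) - (r:ℝ)^2 / b) ≤ 1 * ((lam:ℝ) - (r:ℝ)^2 / b) :=
      mul_le_mul_of_nonpos_right hxx1 (le_of_lt hneg)
    have h7 : (1 - μ)^2 < (r:ℝ) - lam := by linarith
    calc (μ - 1)^2 = (1 - μ)^2 := by ring
    _ < _ := h7
  have hμlt : μ < 1 + Real.sqrt ((r:ℝ) - lam) := by
    have h8 : μ - 1 < Real.sqrt ((r:ℝ) - lam) := by
      calc μ - 1 ≤ |μ - 1| := le_abs_self _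
      _ = Real.sqrt ((μ - 1)^2) := (Real.sqrt_sq_eq_abs _).symm
      _ < Real.sqrt ((r:ℝ) - lam) := Real.sqrt_lt_sqrt (sq_nonneg _) hsq
    linarith
  -- conclude
  have hfrac : (r:ℝ)/b = (k:ℝ)/v := by
    rw [div_eq_div_iff hbb0.ne' hvv0.ne']; nlinarith [hvrR]
  have h9 : xx * ((k:ℝ)/v) < 1 + Real.sqrt ((r:ℝ) - lam) := by
    calc xx * ((k:ℝ)/v) = xx * ((r:ℝ)/b) := by rw [hfrac]
    _ = μ := by rw [hμ]; ring
    _ < _ := hμlt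
  rw [lt_div_iff₀ hkk0]
  have h10 : xx * ((k:ℝ)/v) * v < (1 + Real.sqrt ((r:ℝ) - lam)) * v :=
    mul_lt_mul_of_pos_right h9 hvv0
  have h11 : xx * ((k:ℝ)/v) * v = xx * k := by field_simp
  nlinarith [h10, h11]
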